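/- Let ξ ∈ ℝ be such that ξ is not in the ℚ-vector space spanned by v(K^*). Then the Laurent polynomial ring K[t, t^{-1}] is dense in the completion K(t)_ξ of the rational function field K(t) with respect to the valuation v_ξ defined by v_ξ(Σ a_i t^i) = min_i (v(a_i) + iξ). -/

import Mathlib

open Polynomial

/-- The Gauss valuation of a polynomial `q = Σ_i a_i t^i` at `t`-value `ξ`:
`v_ξ(q) = min_i (v(a_i) + i·ξ)` (set to `0` for the zero polynomial). -/
noncomputable def vPoly {K : Type*} [CommRing K] (v : K → ℝ) (ξ : ℝ)
    (q : Polynomial K) : ℝ :=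
  if h : q.support.Nonempty then
    q.support.inf' h (fun i => v (q.coeff i) + (i : ℝ) * ξ)
  else 0

/-- The valuation `v_ξ` on the rational function field `K(t)`, extending `v` with
`v_ξ(t) = ξ`, computed via numerator and denominator. -/
noncomputable def vRat {K : Type*} [Field K] (v : K → ℝ) (ξ : ℝ)
    (h : RatFunc K) : ℝ :=
  vPoly v ξ h.num - vPoly v ξ h.denom

section Aux

variable {K : Type*} [Field K] {v : K → ℝ} {ξ : ℝ}

lemma v_one (hmul : ∀ a b : K, a ≠ 0 → b ≠ 0 → v (a * b) = v a + v b) :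
    v (1 : K) = 0 := by
  have h := hmul 1 1 one_ne_zero one_ne_zero
  rw [mul_one] at h; linarith

lemma v_neg (hmul : ∀ a b : K, a ≠ 0 → b ≠ 0 → v (a * b) = v a + v b)
    {x : K} (hx : x ≠ 0) : v (-x) = v x := by
  have hm1 : v (-1 : K) = 0 := by
    have h := hmul (-1 : K) (-1) (by norm_num) (by norm_num)
    rw [neg_mul_neg, one_mul] at h
    have h1 := v_one hmul
    linarith
  have h2 := hmul (-1 : K) x (by norm_num) hx
  rw [neg_one_mul] at h2
  rw [h2, hm1, zero_add]

lemma v_sum_ge (hadd : ∀ a b : K, a ≠ 0 → b ≠ 0 → a + b ≠ 0 → min (v a) (v b) ≤ v (a + b))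
    {ι : Type*} (s : Finset ι) (f : ι → K) (B : ℝ)
    (hB : ∀ i ∈ s, f i ≠ 0 → B ≤ v (f i)) (hs : (∑ i ∈ s, f i) ≠ 0) :
    B ≤ v (∑ i ∈ s, f i) := by
  classical
  induction s using Finset.induction_on with
  | empty => simp at hs
  | @insert a t ha ih =>
    rw [Finset.sum_insert ha] at hs ⊢
    by_cases h1 : f a = 0
    · rw [h1, zero_add] at hs ⊢
      exact ih (fun i hi => hB i (Finset.mem_insert_of_mem hi)) hs
    by_cases h2 : (∑ i ∈ t, f i) = 0
    · rw [h2, add_zero] at hs ⊢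
      exact hB a (Finset.mem_insert_self a t) h1
    have hmin := hadd _ _ h1 h2 hs
    have hBa := hB a (Finset.mem_insert_self a t) h1
    have hBs := ih (fun i hi => hB i (Finset.mem_insert_of_mem hi)) h2
    exact le_trans (le_min hBa hBs) hmin

lemma v_sum_exists
    (hadd : ∀ a b : K, a ≠ 0 → b ≠ 0 → a + b ≠ 0 → min (v a) (v b) ≤ v (a + b))
    {ι : Type*} (s : Finset ι) (f : ι → K) (hs : (∑ i ∈ s, f i) ≠ 0) :
    ∃ i ∈ s, f i ≠ 0 ∧ v (f i) ≤ v (∑ i ∈ s, f i) := by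
  classical
  induction s using Finset.induction_on with
  | empty => simp at hs
  | @insert a t ha ih =>
    rw [Finset.sum_insert ha] at hs ⊢
    by_cases h1 : f a = 0
    · rw [h1, zero_add] at hs ⊢
      obtain ⟨i, hi, h3, h4⟩ := ih hs
      exact ⟨i, Finset.mem_insert_of_mem hi, h3, h4⟩
    by_cases h2 : (∑ i ∈ t, f i) = 0
    · rw [h2, add_zero] at hs ⊢
      exact ⟨a, Finset.mem_insert_self a t, h1, le_refl _⟩
    have hmin := hadd _ _ h1 h2 hs
    rcases le_total (v (f a)) (v (∑ i ∈ t, f i)) with hle | hle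
    · refine ⟨a, Finset.mem_insert_self a t, h1, ?_⟩
      rw [min_eq_left hle] at hmin; exact hmin
    · obtain ⟨i, hi, h3, h4⟩ := ih h2
      refine ⟨i, Finset.mem_insert_of_mem hi, h3, ?_⟩
      rw [min_eq_right hle] at hmin
      exact le_trans h4 hmin

lemma v_add_sum_strict (hmul : ∀ a b : K, a ≠ 0 → b ≠ 0 → v (a * b) = v a + v b)
    (hadd : ∀ a b : K, a ≠ 0 → b ≠ 0 → a + b ≠ 0 → min (v a) (v b) ≤ v (a + b))
    {ι : Type*} (s : Finset ι) (f : ι → K) {x : K} (hx : x ≠ 0)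
    (h : ∀ i ∈ s, f i ≠ 0 → v x < v (f i)) :
    x + ∑ i ∈ s, f i ≠ 0 ∧ v (x + ∑ i ∈ s, f i) = v x := by
  by_cases hR : (∑ i ∈ s, f i) = 0
  · simp [hR, hx]
  obtain ⟨i, hi, hfi, hvi⟩ := v_sum_exists hadd s f hR
  have hxR : v x < v (∑ i ∈ s, f i) := lt_of_lt_of_le (h i hi hfi) hvi
  have hne : x + ∑ i ∈ s, f i ≠ 0 := by
    intro h0
    have hxeq : x = -(∑ i ∈ s, f i) := add_eq_zero_iff_eq_neg.mp h0
    have : v x = v (∑ i ∈ s, f i) := by rw [hxeq]; exact v_neg hmul hR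
    linarith
  refine ⟨hne, ?_⟩
  have h1 := hadd x _ hx hR hne
  rw [min_eq_left hxR.le] at h1
  have h2 : min (v (x + ∑ i ∈ s, f i)) (v (-(∑ i ∈ s, f i))) ≤ v x := by
    have h3 := hadd (x + ∑ i ∈ s, f i) (-(∑ i ∈ s, f i)) hne (neg_ne_zero.mpr hR)
      (by rw [add_neg_cancel_right]; exact hx)
    rwa [add_neg_cancel_right] at h3
  rw [v_neg hmul hR] at h2
  rcases min_le_iff.mp h2 with h4 | h4
  · linarith
  · linarith

lemma val_ne_val (hξ : ξ ∉ Submodule.span ℚ (Set.range fun a : Kˣ => v (a : K)))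
    {x y : K} (hx : x ≠ 0) (hy : y ≠ 0) {i j : ℕ} (hij : i ≠ j) :
    v x + (i : ℝ) * ξ ≠ v y + (j : ℝ) * ξ := by
  intro heq
  apply hξ
  have hvx : v x ∈ Submodule.span ℚ (Set.range fun a : Kˣ => v (a : K)) :=
    Submodule.subset_span ⟨Units.mk0 x hx, rfl⟩
  have hvy : v y ∈ Submodule.span ℚ (Set.range fun a : Kˣ => v (a : K)) :=
    Submodule.subset_span ⟨Units.mk0 y hy, rfl⟩
  have hmem := Submodule.smul_mem _ (((j : ℚ) - (i : ℚ))⁻¹)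
    (Submodule.sub_mem _ hvx hvy)
  have hji : (j : ℝ) - (i : ℝ) ≠ 0 := by
    intro h0
    exact hij (by exact_mod_cast (sub_eq_zero.mp h0).symm)
  have hs : (((j : ℚ) - (i : ℚ))⁻¹ : ℚ) • (v x - v y) = ξ := by
    rw [Rat.smul_def]
    push_cast
    rw [inv_mul_eq_div, div_eq_iff hji]
    linarith
  rwa [hs] at hmem

lemma vPoly_def {q : Polynomial K} (hq : q ≠ 0) :
    vPoly v ξ q = q.support.inf' (nonempty_support_iff.mpr hq)
      (fun i => v (q.coeff i) + (i : ℝ) * ξ) := by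
  rw [vPoly, dif_pos (nonempty_support_iff.mpr hq)]

lemma vPoly_le {q : Polynomial K} (hq : q ≠ 0) {i : ℕ} (hi : i ∈ q.support) :
    vPoly v ξ q ≤ v (q.coeff i) + (i : ℝ) * ξ := by
  rw [vPoly_def hq]
  exact Finset.inf'_le _ hi

lemma exists_min (hξ : ξ ∉ Submodule.span ℚ (Set.range fun a : Kˣ => v (a : K)))
    {q : Polynomial K} (hq : q ≠ 0) :
    ∃ j ∈ q.support, vPoly v ξ q = v (q.coeff j) + (j : ℝ) * ξ ∧
      ∀ i ∈ q.support, i ≠ j → vPoly v ξ q < v (q.coeff i) + (i : ℝ) * ξ := by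
  obtain ⟨j, hj, hjm⟩ := Finset.exists_min_image q.support
    (fun i => v (q.coeff i) + (i : ℝ) * ξ) (nonempty_support_iff.mpr hq)
  have heq : vPoly v ξ q = v (q.coeff j) + (j : ℝ) * ξ :=
    le_antisymm (vPoly_le hq hj) (by rw [vPoly_def hq]; exact Finset.le_inf' _ _ hjm)
  refine ⟨j, hj, heq, ?_⟩
  intro i hi hij
  have hne := val_ne_val hξ (mem_support_iff.mp hj) (mem_support_iff.mp hi) (Ne.symm hij)
  rw [heq]
  exact lt_of_le_of_ne (hjm i hi) hne

lemma vPoly_mul (hmul : ∀ a b : K, a ≠ 0 → b ≠ 0 → v (a * b) = v a + v b)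
    (hadd : ∀ a b : K, a ≠ 0 → b ≠ 0 → a + b ≠ 0 → min (v a) (v b) ≤ v (a + b))
    (hξ : ξ ∉ Submodule.span ℚ (Set.range fun a : Kˣ => v (a : K)))
    {a b : Polynomial K} (ha : a ≠ 0) (hb : b ≠ 0) :
    vPoly v ξ (a * b) = vPoly v ξ a + vPoly v ξ b := by
  classical
  obtain ⟨i, hi, hia, hsa⟩ := exists_min hξ ha
  obtain ⟨j, hj, hjb, hsb⟩ := exists_min hξ hb
  have hab : a * b ≠ 0 := mul_ne_zero ha hb
  have hai : a.coeff i ≠ 0 := mem_support_iff.mp hi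
  have hbj : b.coeff j ≠ 0 := mem_support_iff.mp hj
  have hsum : (a * b).coeff (i + j) = a.coeff i * b.coeff j +
      ∑ x ∈ (Finset.HasAntidiagonal.antidiagonal (i + j)).erase (i, j), a.coeff x.1 * b.coeff x.2 := by
    rw [coeff_mul]
    exact (Finset.add_sum_erase (Finset.HasAntidiagonal.antidiagonal (i + j))
      (fun x => a.coeff x.1 * b.coeff x.2)
      (a := (i, j)) (Finset.HasAntidiagonal.mem_antidiagonal.mpr rfl)).symm
  have hkey := v_add_sum_strict hmul hadd ((Finset.HasAntidiagonal.antidiagonal (i + j)).erase (i, j))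
    (fun x => a.coeff x.1 * b.coeff x.2) (mul_ne_zero hai hbj) ?_
  · rw [← hsum] at hkey
    have hmem : i + j ∈ (a * b).support := mem_support_iff.mpr hkey.1
    have hge : ∀ k ∈ (a * b).support,
        vPoly v ξ a + vPoly v ξ b ≤ v ((a * b).coeff k) + (k : ℝ) * ξ := by
      intro k hk
      have hck : (a * b).coeff k ≠ 0 := mem_support_iff.mp hk
      rw [coeff_mul] at hck ⊢
      have hgs := v_sum_ge hadd (Finset.HasAntidiagonal.antidiagonal k)
        (fun x => a.coeff x.1 * b.coeff x.2) (vPoly v ξ a + vPoly v ξ b - (k : ℝ) * ξ) ?_ hck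
      · linarith
      · intro x hx hxne
        have hm : x.1 + x.2 = k := Finset.HasAntidiagonal.mem_antidiagonal.mp hx
        have ham : a.coeff x.1 ≠ 0 := left_ne_zero_of_mul hxne
        have hbn : b.coeff x.2 ≠ 0 := right_ne_zero_of_mul hxne
        have l1 := vPoly_le (v := v) (ξ := ξ) ha (mem_support_iff.mpr ham)
        have l2 := vPoly_le (v := v) (ξ := ξ) hb (mem_support_iff.mpr hbn)
        have hc : ((x.1 : ℝ) + (x.2 : ℝ)) = (k : ℝ) := by exact_mod_cast hm
        have hc2 : (x.1 : ℝ) * ξ + (x.2 : ℝ) * ξ = (k : ℝ) * ξ := by rw [← add_mul, hc]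
        show vPoly v ξ a + vPoly v ξ b - (k : ℝ) * ξ ≤ v (a.coeff x.1 * b.coeff x.2)
        rw [hmul _ _ ham hbn]
        linarith
    apply le_antisymm
    · have hle := vPoly_le (v := v) (ξ := ξ) hab hmem
      rw [hkey.2, hmul _ _ hai hbj] at hle
      have hc : ((i + j : ℕ) : ℝ) * ξ = (i : ℝ) * ξ + (j : ℝ) * ξ := by
        push_cast; ring
      rw [hc] at hle
      linarith
    · rw [vPoly_def hab]
      exact Finset.le_inf' _ _ hge
  · intro x hxmem hxne
    have hm : x.1 + x.2 = i + j := Finset.HasAntidiagonal.mem_antidiagonal.mp (Finset.mem_of_mem_erase hxmem)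
    have hxij : x ≠ (i, j) := Finset.ne_of_mem_erase hxmem
    have ham : a.coeff x.1 ≠ 0 := left_ne_zero_of_mul hxne
    have hbn : b.coeff x.2 ≠ 0 := right_ne_zero_of_mul hxne
    have h1 : x.1 ≠ i := fun h => hxij (Prod.ext h (by omega))
    have h2 : x.2 ≠ j := fun h => hxij (Prod.ext (by omega) h)
    have hsa' := hsa x.1 (mem_support_iff.mpr ham) h1
    have hsb' := hsb x.2 (mem_support_iff.mpr hbn) h2
    have hc : ((x.1 : ℝ) + (x.2 : ℝ)) = (i : ℝ) + (j : ℝ) := by exact_mod_cast hm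
    have hc2 : (x.1 : ℝ) * ξ + (x.2 : ℝ) * ξ = (i : ℝ) * ξ + (j : ℝ) * ξ := by
      rw [← add_mul, hc, add_mul]
    show v (a.coeff i * b.coeff j) < v (a.coeff x.1 * b.coeff x.2)
    rw [hmul _ _ hai hbj, hmul _ _ ham hbn]
    linarith

lemma vPoly_single {c : K} (hc : c ≠ 0) (j : ℕ) :
    vPoly v ξ (C c * X ^ j) = v c + (j : ℝ) * ξ := by
  have hcoeff : (C c * X ^ j : Polynomial K).coeff j = c := by
    rw [C_mul_X_pow_eq_monomial, coeff_monomial]; simp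
  have hne : (C c * X ^ j : Polynomial K) ≠ 0 := fun h0 => hc (by rw [← hcoeff, h0]; simp)
  have hmem : j ∈ (C c * X ^ j : Polynomial K).support :=
    mem_support_iff.mpr (by rw [hcoeff]; exact hc)
  have hs : (C c * X ^ j : Polynomial K).support = {j} := by
    rw [C_mul_X_pow_eq_monomial, support_monomial _ hc]
  refine le_antisymm ?_ ?_
  · have := vPoly_le (v := v) (ξ := ξ) hne hmem
    rwa [hcoeff] at this
  · rw [vPoly_def hne]
    apply Finset.le_inf'
    intro i hi
    have hij : i = j := by rw [hs] at hi; simpa using hi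
    subst hij
    rw [hcoeff]

lemma vPoly_one (hmul : ∀ a b : K, a ≠ 0 → b ≠ 0 → v (a * b) = v a + v b) :
    vPoly v ξ (1 : Polynomial K) = 0 := by
  have h := vPoly_single (v := v) (ξ := ξ) (one_ne_zero : (1 : K) ≠ 0) 0
  simp only [pow_zero, mul_one, map_one, Nat.cast_zero, zero_mul, add_zero] at h
  rw [h, v_one hmul]

lemma vPoly_pow (hmul : ∀ a b : K, a ≠ 0 → b ≠ 0 → v (a * b) = v a + v b)
    (hadd : ∀ a b : K, a ≠ 0 → b ≠ 0 → a + b ≠ 0 → min (v a) (v b) ≤ v (a + b))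
    (hξ : ξ ∉ Submodule.span ℚ (Set.range fun a : Kˣ => v (a : K)))
    {a : Polynomial K} (ha : a ≠ 0) (N : ℕ) :
    vPoly v ξ (a ^ N) = N * vPoly v ξ a := by
  induction N with
  | zero => simp [vPoly_one hmul]
  | succ n ih =>
    rw [pow_succ, vPoly_mul hmul hadd hξ (pow_ne_zero n ha) ha, ih]
    push_cast; ring

lemma vRat_div (hmul : ∀ a b : K, a ≠ 0 → b ≠ 0 → v (a * b) = v a + v b)
    (hadd : ∀ a b : K, a ≠ 0 → b ≠ 0 → a + b ≠ 0 → min (v a) (v b) ≤ v (a + b))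
    (hξ : ξ ∉ Submodule.span ℚ (Set.range fun a : Kˣ => v (a : K)))
    {a b : Polynomial K} (ha : a ≠ 0) (hb : b ≠ 0) :
    vRat v ξ (algebraMap (Polynomial K) (RatFunc K) a
      / algebraMap (Polynomial K) (RatFunc K) b) = vPoly v ξ a - vPoly v ξ b := by
  set g := algebraMap (Polynomial K) (RatFunc K) a
    / algebraMap (Polynomial K) (RatFunc K) b with hg
  have hg0 : g ≠ 0 :=
    div_ne_zero (RatFunc.algebraMap_ne_zero ha) (RatFunc.algebraMap_ne_zero hb)
  have hnum : g.num ≠ 0 := RatFunc.num_ne_zero hg0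
  have hden : g.denom ≠ 0 := g.denom_ne_zero
  have h1 : algebraMap (Polynomial K) (RatFunc K) g.num
      / algebraMap (Polynomial K) (RatFunc K) g.denom
      = algebraMap (Polynomial K) (RatFunc K) a / algebraMap (Polynomial K) (RatFunc K) b := by
    rw [RatFunc.num_div_denom]
  have h2 : g.num * b = a * g.denom := by
    have h3 := (div_eq_div_iff (RatFunc.algebraMap_ne_zero hden)
      (RatFunc.algebraMap_ne_zero hb)).mp h1
    rw [← map_mul, ← map_mul] at h3
    exact RatFunc.algebraMap_injective K h3
  have h4 : vPoly v ξ g.num + vPoly v ξ b = vPoly v ξ a + vPoly v ξ g.denom := by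
    rw [← vPoly_mul hmul hadd hξ hnum hb, ← vPoly_mul hmul hadd hξ ha hden, h2]
  simp only [vRat]
  linarith

lemma key_poly (f q : Polynomial K) (c : K) (hc : c ≠ 0) (j : ℕ) (N : ℕ) :
    ∃ p : Polynomial K,
      p * (C c * X ^ j) ^ N * q
        = f * ((C c * X ^ j) ^ N - (C c * X ^ j - q) ^ N) * X ^ (j * N) := by
  induction N with
  | zero => exact ⟨0, by simp⟩
  | succ n ih =>
    obtain ⟨p, hI⟩ := ih
    have hcc : C (c⁻¹ ^ (n + 1)) * C c ^ (n + 1) = (1 : Polynomial K) := by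
      rw [← C_pow, ← C_mul, ← mul_pow, inv_mul_cancel₀ hc, one_pow, C_1]
    refine ⟨p * X ^ j + f * (C c * X ^ j - q) ^ n * C (c⁻¹ ^ (n + 1)), ?_⟩
    linear_combination ((C c * X ^ j) * X ^ j) * hI
      + (f * (C c * X ^ j - q) ^ n * X ^ (j * (n + 1)) * q) * hcc

lemma key_ind (h : RatFunc K) (f q : Polynomial K) (c : K) (hc : c ≠ 0) (j : ℕ)
    (hq : q ≠ 0) (hCX : (C c * X ^ j : Polynomial K) ≠ 0)
    (hh : h = algebraMap (Polynomial K) (RatFunc K) f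
      / algebraMap (Polynomial K) (RatFunc K) q) (N : ℕ) :
    ∃ p : Polynomial K,
      h - algebraMap (Polynomial K) (RatFunc K) p / RatFunc.X ^ (j * N)
        = algebraMap (Polynomial K) (RatFunc K) (f * (C c * X ^ j - q) ^ N)
          / algebraMap (Polynomial K) (RatFunc K) ((C c * X ^ j) ^ N * q) := by
  set A := algebraMap (Polynomial K) (RatFunc K) with hA
  have hAq : A q ≠ 0 := RatFunc.algebraMap_ne_zero hq
  have hXne : (RatFunc.X : RatFunc K) ≠ 0 := RatFunc.X_ne_zero
  have hAX : A X = RatFunc.X := RatFunc.algebraMap_X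
  have hden : ((C c * X ^ j) ^ N * q : Polynomial K) ≠ 0 :=
    mul_ne_zero (pow_ne_zero _ hCX) hq
  obtain ⟨p, hI⟩ := key_poly f q c hc j N
  refine ⟨p, ?_⟩
  have hIA := congrArg A hI
  simp only [map_mul, map_sub, map_pow, hAX] at hIA
  rw [hh, div_sub_div _ _ hAq (pow_ne_zero _ hXne),
    div_eq_div_iff (mul_ne_zero hAq (pow_ne_zero _ hXne)) (RatFunc.algebraMap_ne_zero hden)]
  simp only [map_mul, map_pow, map_sub, ← hA, hAX]
  linear_combination (-(A q)) * hIA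

end Aux

/-- If `ξ` is not in the `ℚ`-span of `v(K^*)`, then the Laurent polynomials
`K[t, t⁻¹]` are dense in `K(t)` for the valuation `v_ξ`: every `h ∈ K(t)` is
approximated to arbitrary order `M` by Laurent polynomials `p · t^{-k}`. -/
theorem laurent_dense_in_completion {K : Type*} [Field K] (v : K → ℝ)
    (hmul : ∀ a b : K, a ≠ 0 → b ≠ 0 → v (a * b) = v a + v b)
    (hadd : ∀ a b : K, a ≠ 0 → b ≠ 0 → a + b ≠ 0 → min (v a) (v b) ≤ v (a + b))
    (ξ : ℝ) (hξ : ξ ∉ Submodule.span ℚ (Set.range fun a : Kˣ => v (a : K)))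
    (h : RatFunc K) (M : ℝ) :
    ∃ (p : Polynomial K) (k : ℕ),
      h - algebraMap (Polynomial K) (RatFunc K) p / RatFunc.X ^ k = 0 ∨
      M < vRat v ξ (h - algebraMap (Polynomial K) (RatFunc K) p / RatFunc.X ^ k) := by
  by_cases h0 : h = 0
  · exact ⟨0, 0, Or.inl (by simp [h0])⟩
  set f := h.num with hf'
  set q := h.denom with hq'
  have hq : q ≠ 0 := h.denom_ne_zero
  have hf : f ≠ 0 := RatFunc.num_ne_zero h0
  obtain ⟨j, hjmem, hjval, hjstrict⟩ := exists_min (v := v) hξ hq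
  set c := q.coeff j with hc'
  have hc : c ≠ 0 := mem_support_iff.mp hjmem
  have hh : h = algebraMap (Polynomial K) (RatFunc K) f
      / algebraMap (Polynomial K) (RatFunc K) q := (RatFunc.num_div_denom h).symm
  have hCX : (C c * X ^ j : Polynomial K) ≠ 0 := by
    intro h0'
    apply hc
    have : (C c * X ^ j : Polynomial K).coeff j = 0 := by rw [h0']; simp
    rwa [C_mul_X_pow_eq_monomial, coeff_monomial, if_pos rfl] at this
  set s : Polynomial K := C c * X ^ j - q with hs'
  by_cases hs0 : s = 0
  · obtain ⟨p, hp⟩ := key_ind h f q c hc j hq hCX hh 1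
    refine ⟨p, j * 1, Or.inl ?_⟩
    rw [hp, ← hs', hs0]
    simp
  · have hsgt : v c + (j : ℝ) * ξ < vPoly v ξ s := by
      rw [vPoly_def hs0, Finset.lt_inf'_iff]
      intro i hi
      have hsi : s.coeff i ≠ 0 := mem_support_iff.mp hi
      have hij : i ≠ j := by
        intro hij; subst hij
        apply hsi
        rw [hs', coeff_sub, coeff_C_mul, coeff_X_pow, if_pos rfl, mul_one, hc', sub_self]
      have hcoeff : s.coeff i = -q.coeff i := by
        rw [hs', coeff_sub, coeff_C_mul, coeff_X_pow, if_neg hij, mul_zero, zero_sub]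
      have hqi : q.coeff i ≠ 0 := by
        intro h0'; apply hsi; rw [hcoeff, h0', neg_zero]
      show v c + (j : ℝ) * ξ < v (s.coeff i) + (i : ℝ) * ξ
      rw [hcoeff, v_neg hmul hqi]
      have := hjstrict i (mem_support_iff.mpr hqi) hij
      rw [hjval] at this
      exact this
    set δ := vPoly v ξ s - (v c + (j : ℝ) * ξ) with hδ'
    have hδ : 0 < δ := by rw [hδ']; linarith
    obtain ⟨N, hN⟩ := exists_nat_gt ((M - (vPoly v ξ f - vPoly v ξ q)) / δ)
    have hN2 : M - (vPoly v ξ f - vPoly v ξ q) < (N : ℝ) * δ := by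
      rw [div_lt_iff₀ hδ] at hN
      linarith
    obtain ⟨p, hp⟩ := key_ind h f q c hc j hq hCX hh N
    refine ⟨p, j * N, Or.inr ?_⟩
    rw [hp, ← hs']
    have hsN : f * s ^ N ≠ 0 := mul_ne_zero hf (pow_ne_zero _ hs0)
    have hden : ((C c * X ^ j) ^ N * q : Polynomial K) ≠ 0 :=
      mul_ne_zero (pow_ne_zero _ hCX) hq
    rw [vRat_div hmul hadd hξ hsN hden,
      vPoly_mul hmul hadd hξ hf (pow_ne_zero _ hs0),
      vPoly_mul hmul hadd hξ (pow_ne_zero _ hCX) hq,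
      vPoly_pow hmul hadd hξ hs0 N,
      vPoly_pow hmul hadd hξ hCX N,
      vPoly_single hc j]
    have hdist : (N : ℝ) * δ = (N : ℝ) * vPoly v ξ s - (N : ℝ) * (v c + (j : ℝ) * ξ) := by
      rw [hδ']; ring
    linarith
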